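/- There exists a tuatara machine W that is universal for the class of all convergent machines: ζ_W ≤ 1, and for every Turing machine V with ζ_V < ∞ there is a constant c ≥ 0 such that for every x ∈ dom(V) there is a string p with |p| ≤ |x| + c and W(p) = V(x). -/

import Mathlib

open scoped ENNReal

/-- The domain of a Turing machine (a partial function on binary strings). -/
def dom (f : List Bool →. List Bool) : Set (List Bool) := {p | (f p).Dom}

/-- A machine is self-delimiting if its domain is prefix-free. -/
def SelfDelim (f : List Bool →. List Bool) : Prop :=
  ∀ p ∈ dom f, ∀ q ∈ dom f, p <+: q → p = q

/-- Chaitin's Omega number of a machine, in `[0,∞]`. -/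
noncomputable def Omega (f : List Bool →. List Bool) : ℝ≥0∞ :=
  ∑' p : dom f, (2 : ℝ≥0∞)⁻¹ ^ (p : List Bool).length

/-- `bin n` is the binary expansion of `n` with the leading 1 removed. -/
def bin (n : ℕ) : List Bool := (Nat.bits n).reverse.tail

/-- `Υ[A]`: the set of positive integers whose `bin`-code lies in `A`. -/
def Ups (A : Set (List Bool)) : Set ℕ := {n | 1 ≤ n ∧ bin n ∈ A}

/-- The zeta number of a machine, in `[0,∞]`. -/
noncomputable def zeta (f : List Bool →. List Bool) : ℝ≥0∞ :=
  ∑' n : Ups (dom f), ((n : ℕ) : ℝ≥0∞)⁻¹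

/-- `U` is a universal self-delimiting Turing machine. -/
def UnivSD (U : List Bool →. List Bool) : Prop :=
  SelfDelim U ∧ ∀ C : List Bool →. List Bool, Partrec C → SelfDelim C →
    ∃ c : ℕ, ∀ x ∈ dom C, ∃ p : List Bool, p.length ≤ x.length + c ∧ U p = C x

/-- `T` is a universal (plain) Turing machine. -/
def UnivTM (T : List Bool →. List Bool) : Prop :=
  ∀ C : List Bool →. List Bool, Partrec C →
    ∃ c : ℕ, ∀ x ∈ dom C, ∃ p : List Bool, p.length ≤ x.length + c ∧ T p = C x

/-- Program-size / plain complexity of a string w.r.t. a machine. -/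
noncomputable def Cpx (f : List Bool →. List Bool) (y : List Bool) : ℕ :=
  sInf {n : ℕ | ∃ w : List Bool, w.length = n ∧ y ∈ f w}

/-- Natural complexity of a string w.r.t. a machine, with `min ∅ = ∞`. -/
noncomputable def nabla (f : List Bool →. List Bool) (y : List Bool) : ℝ≥0∞ :=
  sInf {c : ℝ≥0∞ | ∃ n : ℕ, 1 ≤ n ∧ y ∈ f (bin n) ∧ c = (n : ℝ≥0∞)}

/-- The real number with binary digit sequence `x`. -/
noncomputable def realDigits (x : ℕ → Bool) : ℝ :=
  ∑' i : ℕ, (if x i then (1 : ℝ) else 0) * (2 : ℝ)⁻¹ ^ (i + 1)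

/-- The extended nonnegative real with binary digit sequence `x`. -/
noncomputable def ennDigits (x : ℕ → Bool) : ℝ≥0∞ :=
  ∑' i : ℕ, (if x i then (1 : ℝ≥0∞) else 0) * (2 : ℝ≥0∞)⁻¹ ^ (i + 1)

/-- The string of the first `m` digits of the sequence `x`. -/
def prefixStr (x : ℕ → Bool) (m : ℕ) : List Bool := (List.range m).map x

/-- A real is computable if it is approximated to within `2⁻ⁿ` by a computable
sequence of rationals. -/
def ComputableReal (s : ℝ) : Prop :=
  ∃ f : ℕ → ℚ, Computable f ∧ ∀ n : ℕ, |s - (f n : ℝ)| ≤ (2 : ℝ)⁻¹ ^ n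

def natVal (x : List Bool) : ℕ := x.foldl (fun a b => 2 * a + cond b 1 0) 1

theorem natVal_append (x : List Bool) (b : Bool) :
    natVal (x ++ [b]) = 2 * natVal x + cond b 1 0 := by
  simp [natVal]

theorem one_le_natVal (x : List Bool) : 1 ≤ natVal x := by
  induction x using List.reverseRecOn with
  | nil => simp [natVal]
  | append_singleton x b ih => rw [natVal_append]; omega

theorem natVal_lt (x : List Bool) : natVal x < 2 ^ (x.length + 1) := by
  induction x using List.reverseRecOn with
  | nil => simp [natVal]
  | append_singleton x b ih =>
      rw [natVal_append]
      simp only [List.length_append, List.length_singleton]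
      have : 2 ^ (x.length + 1 + 1) = 2 * 2 ^ (x.length + 1) := by ring
      cases b <;> simp <;> omega

theorem le_natVal (x : List Bool) : 2 ^ x.length ≤ natVal x := by
  induction x using List.reverseRecOn with
  | nil => simp [natVal]
  | append_singleton x b ih =>
      rw [natVal_append]
      simp only [List.length_append, List.length_singleton]
      have : 2 ^ (x.length + 1) = 2 * 2 ^ x.length := by ring
      cases b <;> simp <;> omega

theorem bits_ne_nil {n : ℕ} (h : n ≠ 0) : Nat.bits n ≠ [] := by
  intro hc
  have hs : n.size = 0 := by rw [← Nat.size_eq_bits_len, hc]; rfl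
  exact h (Nat.size_eq_zero.mp hs)

theorem bin_two_mul {n : ℕ} (h : n ≠ 0) : bin (2 * n) = bin n ++ [false] := by
  unfold bin
  rw [Nat.bit0_bits n h]
  rw [List.reverse_cons, List.tail_append_of_ne_nil]
  simp [h, bits_ne_nil]

theorem bin_two_mul_add_one {n : ℕ} (h : n ≠ 0) : bin (2 * n + 1) = bin n ++ [true] := by
  unfold bin
  rw [Nat.bit1_bits n]
  rw [List.reverse_cons, List.tail_append_of_ne_nil]
  simp [h, bits_ne_nil]

theorem bin_one : bin 1 = [] := by unfold bin; rw [Nat.one_bits]; rfl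

theorem bin_natVal (x : List Bool) : bin (natVal x) = x := by
  induction x using List.reverseRecOn with
  | nil => simpa [natVal] using bin_one
  | append_singleton x b ih =>
      rw [natVal_append]
      have h1 : natVal x ≠ 0 := by have := one_le_natVal x; omega
      cases b
      · simpa [bin_two_mul h1] using congrArg (· ++ [false]) ih
      · simpa [bin_two_mul_add_one h1] using congrArg (· ++ [true]) ih

theorem natVal_bin {n : ℕ} (h : 1 ≤ n) : natVal (bin n) = n := by
  induction n using Nat.strong_induction_on with
  | _ n ih =>
      rcases Nat.lt_or_ge n 2 with h2 | h2
      · interval_cases n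
        simp [bin_one, natVal]
      · have hm : 1 ≤ n / 2 := by omega
        have hm0 : n / 2 ≠ 0 := by omega
        have hlt : n / 2 < n := Nat.div_lt_self (by omega) (by norm_num)
        rcases Nat.even_or_odd n with he | ho
        · obtain ⟨m, hmeq⟩ := he
          have : n = 2 * (n / 2) := by omega
          rw [this, bin_two_mul hm0, natVal_append, ih _ hlt hm]
          simp only [cond_false]
          omega
        · obtain ⟨m, hmeq⟩ := ho
          have : n = 2 * (n / 2) + 1 := by omega
          rw [this, bin_two_mul_add_one hm0, natVal_append, ih _ hlt hm]
          simp only [cond_true]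

def allStrs : ℕ → List (List Bool)
  | 0 => [[]]
  | (l + 1) => (allStrs l).flatMap (fun x => [false :: x, true :: x])

theorem mem_allStrs (x : List Bool) (l : ℕ) : x ∈ allStrs l ↔ x.length = l := by
  induction l generalizing x with
  | zero => simp [allStrs, List.length_eq_zero_iff]
  | succ l ih =>
      simp only [allStrs, List.mem_flatMap, List.mem_cons]
      constructor
      · rintro ⟨y, hy, h | h | h⟩ <;> simp_all [ih]
      · intro hx
        cases x with
        | nil => simp at hx
        | cons b t =>
            refine ⟨t, (ih t).mpr (by simpa using hx), ?_⟩
            cases b <;> simp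


theorem allStrs_nodup (l : ℕ) : (allStrs l).Nodup := by
  induction l with
  | zero => simp [allStrs]
  | succ l ih =>
      rw [allStrs, List.nodup_flatMap]
      refine ⟨fun x _ => by simp, ?_⟩
      refine ih.imp ?_
      intro a b hab
      intro z hz1 hz2
      simp only [List.mem_cons, List.mem_singleton] at hz1 hz2
      rcases hz1 with h | h | h <;> rcases hz2 with h' | h' | h' <;>
        simp_all

/-- the list of all strings of length ≤ s -/
def strsLE (s : ℕ) : List (List Bool) := (List.range (s + 1)).flatMap allStrs

theorem mem_strsLE (x : List Bool) (s : ℕ) : x ∈ strsLE s ↔ x.length ≤ s := by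
  simp only [strsLE, List.mem_flatMap, List.mem_range, mem_allStrs]
  constructor
  · rintro ⟨l, hl, rfl⟩; omega
  · intro h; exact ⟨x.length, by omega, rfl⟩

theorem strsLE_nodup (s : ℕ) : (strsLE s).Nodup := by
  rw [strsLE, List.nodup_flatMap]
  refine ⟨fun l _ => allStrs_nodup l, ?_⟩
  refine (List.nodup_range (n := _)).imp ?_
  intro a b hab z hz1 hz2
  rw [mem_allStrs] at hz1 hz2
  omega

/-- the canonical program -/
def canon (j k : ℕ) (x : List Bool) : List Bool :=
  List.replicate j true ++ false :: (List.replicate (2 * k + 3) true ++ false :: x)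

theorem canon_length (j k : ℕ) (x : List Bool) :
    (canon j k x).length = x.length + (j + 2 * k + 5) := by
  simp [canon]; omega

def parse (p : List Bool) : Option ((ℕ × ℕ) × List Bool) :=
  let j := p.findIdx (fun b => b == false)
  let q := p.drop (j + 1)
  let m := q.findIdx (fun b => b == false)
  let x := q.drop (m + 1)
  if j + m + 2 + x.length = p.length ∧ 3 ≤ m ∧ m % 2 = 1 then
    some ((j, (m - 3) / 2), x)
  else none

theorem findIdx_replicate_append (j : ℕ) (r : List Bool) :
    (List.replicate j true ++ false :: r).findIdx (fun b => b == false) = j := by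
  induction j with
  | zero => simp [List.findIdx_cons]
  | succ j ih => simpa [List.replicate_succ, List.findIdx_cons] using ih

theorem parse_canon (j k : ℕ) (x : List Bool) : parse (canon j k x) = some ((j, k), x) := by
  have h1 : (canon j k x).findIdx (fun b => b == false) = j := findIdx_replicate_append _ _
  have h2 : (canon j k x).drop (j + 1) = List.replicate (2 * k + 3) true ++ false :: x := by
    show List.drop (j + 1) (List.replicate j true ++ false :: _) = _
    rw [List.drop_append]
    simp
  rw [parse]
  simp only [h1, h2, findIdx_replicate_append]
  have h3 : (List.replicate (2 * k + 3) true ++ false :: x).drop (2 * k + 3 + 1) = x := by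
    rw [List.drop_append]
    simp
  rw [h3, canon_length]
  have hk : (2 * k + 3 - 3) / 2 = k := by omega
  rw [if_pos (by omega)]
  simp [hk]

/-- reconstruction from findIdx -/
theorem eq_replicate_append_of_findIdx {p : List Bool} {j : ℕ}
    (h : p.findIdx (fun b => b == false) = j) (hl : j < p.length) :
    p = List.replicate j true ++ false :: p.drop (j + 1) := by
  induction p generalizing j with
  | nil => simp at hl
  | cons b t ih =>
      cases b with
      | false => simp [List.findIdx_cons] at h; subst h; simp
      | true =>
          rw [List.findIdx_cons] at h
          simp only [show (true == false) = false from rfl, cond_false] at h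
          cases j with
          | zero => simp at h
          | succ j =>
              have hj : List.findIdx (fun b => b == false) t = j := by omega
              have hlt : j < t.length := by simpa using Nat.lt_of_succ_lt_succ hl
              have ht := ih hj hlt
              calc true :: t = true :: (List.replicate j true ++ false :: t.drop (j + 1)) := by
                    rw [← ht]
                _ = List.replicate (j + 1) true ++ false :: (true :: t).drop (j + 1 + 1) := by
                    simp [List.replicate_succ]

theorem parse_eq_some {p : List Bool} {j k : ℕ} {x : List Bool}
    (h : parse p = some ((j, k), x)) : p = canon j k x := by
  rw [parse] at h
  split_ifs at h with hc
  · obtain ⟨hlen, hm3, hmodd⟩ := hc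
    rw [Option.some.injEq, Prod.mk.injEq, Prod.mk.injEq] at h
    obtain ⟨⟨hj, hk⟩, hx⟩ := h
    set j0 := p.findIdx (fun b => b == false) with hj0
    set q := p.drop (j0 + 1) with hq
    set m := q.findIdx (fun b => b == false) with hm
    have hmk : m = 2 * k + 3 := by omega
    have hjlt : j0 < p.length := by omega
    have hp1 : p = List.replicate j0 true ++ false :: q :=
      eq_replicate_append_of_findIdx rfl hjlt
    have hqlen : q.length = m + 1 + (q.drop (m + 1)).length := by
      have : q.length = p.length - (j0 + 1) := by rw [hq]; simp
      have hd : (q.drop (m + 1)).length = q.length - (m + 1) := by simp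
      omega
    have hmlt : m < q.length := by omega
    have hq1 : q = List.replicate m true ++ false :: q.drop (m + 1) :=
      eq_replicate_append_of_findIdx rfl hmlt
    rw [canon, ← hj, ← hx, ← hmk]
    rw [hp1, ← hq1]

open Nat.Partrec (Code)
open Nat.Partrec.Code

def AA (j s : ℕ) : ℕ :=
  ((strsLE s).map (fun x =>
    if (evaln s (Denumerable.ofNat Code j) (Encodable.encode x)).isSome
    then 2 ^ (2 * s) / natVal x else 0)).sum

def F2 (t : (ℕ × ℕ) × List Bool) (s : ℕ) : Option ℕ :=
  if t.2.length ≤ s ∧ AA t.1.1 s ≤ 2 ^ (t.1.2 + 2 * s) then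
    evaln s (Denumerable.ofNat Code t.1.1) (Encodable.encode t.2)
  else none

def WW : List Bool →. List Bool := fun p =>
  (Part.ofOption (parse p)).bind fun t =>
    (Nat.rfindOpt (F2 t)).bind fun a => Part.ofOption (Encodable.decode a)

namespace CompProofs
open Primrec

theorem primrec_pow : Primrec₂ ((· ^ ·) : ℕ → ℕ → ℕ) :=
  Primrec₂.unpaired'.mp Nat.Primrec.pow

theorem primrec_drop : Primrec₂ (fun (l : List Bool) (n : ℕ) => l.drop n) := by
  have h : Primrec₂ (fun (l : List Bool) (n : ℕ) =>
      n.rec (motive := fun _ => List Bool) l fun _ IH => IH.tail) :=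
    Primrec.nat_rec .id ((list_tail.comp (snd.comp snd)).to₂)
  refine h.of_eq fun l n => ?_
  induction n with
  | zero => rfl
  | succ n ih => simp only [ih]; exact (List.tail_drop (l := l) (i := n)) 

theorem primrec_natVal : Primrec natVal := by
  have h : Primrec (fun q : ℕ × Bool => 2 * q.1 + cond q.2 1 0) :=
    nat_add.comp (nat_mul.comp (const 2) fst) (Primrec.cond snd (const 1) (const 0))
  exact list_foldl .id (const 1) ((h.comp snd).to₂)

theorem primrec_allStrs : Primrec allStrs := by
  have hg : Primrec₂ (fun (_ : ℕ × List (List Bool)) (x : List Bool) =>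
      [false :: x, true :: x] : ℕ × List (List Bool) → List Bool → List (List Bool)) := by
    have h1 : Primrec (fun x : List Bool => [false :: x, true :: x]) :=
      list_cons.comp (list_cons.comp (const false) Primrec.id)
        (list_cons.comp (list_cons.comp (const true) Primrec.id) (const []))
    exact (h1.comp snd).to₂
  have h : Primrec (Nat.rec (motive := fun _ => List (List Bool)) [[]]
      (fun _ IH => IH.flatMap (fun x => [false :: x, true :: x]))) :=
    Primrec.nat_rec₁ _ (list_flatMap snd hg).to₂
  refine h.of_eq fun n => ?_
  induction n with
  | zero => rfl
  | succ n ih => simp only [allStrs]; rw [← ih]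

theorem primrec_strsLE : Primrec strsLE :=
  list_flatMap (list_range.comp succ) ((primrec_allStrs.comp snd).to₂)

theorem primrec_sum : Primrec (List.sum : List ℕ → ℕ) := by
  have h : Primrec (fun l : List ℕ => l.foldr (· + ·) 0) :=
    list_foldr .id (const 0) ((nat_add.comp (fst.comp snd) (snd.comp snd)).to₂)
  exact h.of_eq fun l => by rw [List.sum_eq_foldr]

theorem primrec_evalnIsSome :
    Primrec (fun q : (ℕ × ℕ) × List Bool =>
      (evaln q.1.2 (Denumerable.ofNat Code q.1.1) (Encodable.encode q.2)).isSome) := by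
  have h : Primrec (fun q : (ℕ × ℕ) × List Bool =>
      evaln q.1.2 (Denumerable.ofNat Code q.1.1) (Encodable.encode q.2)) :=
    primrec_evaln.comp (((snd.comp fst).pair ((Primrec.ofNat Code).comp (fst.comp fst))).pair
      (Primrec.encode.comp snd))
  exact option_isSome.comp h

theorem primrec_AA : Primrec₂ AA := by
  have hc : PrimrecPred (fun q : (ℕ × ℕ) × List Bool =>
      (evaln q.1.2 (Denumerable.ofNat Code q.1.1) (Encodable.encode q.2)).isSome = true) :=
    Primrec.primrecPred (primrec_evalnIsSome.of_eq fun q => by simp)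
  have hf : Primrec (fun q : (ℕ × ℕ) × List Bool => 2 ^ (2 * q.1.2) / natVal q.2) :=
    nat_div.comp (primrec_pow.comp (const 2) (nat_mul.comp (const 2) (snd.comp fst)))
      (primrec_natVal.comp snd)
  have hterm : Primrec₂ (fun (p : ℕ × ℕ) (x : List Bool) =>
      if (evaln p.2 (Denumerable.ofNat Code p.1) (Encodable.encode x)).isSome
      then 2 ^ (2 * p.2) / natVal x else 0) := (Primrec.ite hc hf (const 0)).to₂
  exact (primrec_sum.comp (list_map (primrec_strsLE.comp snd) hterm)).to₂

theorem primrec_F2 : Primrec₂ F2 := by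
  have hc : PrimrecPred (fun q : ((ℕ × ℕ) × List Bool) × ℕ =>
      q.1.2.length ≤ q.2 ∧ AA q.1.1.1 q.2 ≤ 2 ^ (q.1.1.2 + 2 * q.2)) := by
    refine PrimrecPred.and ?_ ?_
    · exact nat_le.comp (list_length.comp (snd.comp fst)) snd
    · exact nat_le.comp (primrec_AA.comp (fst.comp (fst.comp fst)) snd)
        (primrec_pow.comp (const 2) (nat_add.comp (snd.comp (fst.comp fst)) (nat_mul.comp (const 2) snd)))
  have hev : Primrec (fun q : ((ℕ × ℕ) × List Bool) × ℕ =>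
      evaln q.2 (Denumerable.ofNat Code q.1.1.1) (Encodable.encode q.1.2)) :=
    primrec_evaln.comp ((snd.pair ((Primrec.ofNat Code).comp (fst.comp (fst.comp fst)))).pair
      (Primrec.encode.comp (snd.comp fst)))
  exact (Primrec.ite hc hev (const none)).to₂

theorem primrec_parse : Primrec parse := by
  have hpred : Primrec₂ (fun (_ : List Bool) (b : Bool) => b == false) :=
    (Primrec.beq.comp .id (const false)).comp snd |>.to₂
  have hj : Primrec (fun p : List Bool => p.findIdx (fun b => b == false)) :=
    list_findIdx .id hpred
  have hq : Primrec (fun p : List Bool => p.drop (p.findIdx (fun b => b == false) + 1)) :=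
    primrec_drop.comp .id (succ.comp hj)
  have hm : Primrec (fun p : List Bool =>
      (p.drop (p.findIdx (fun b => b == false) + 1)).findIdx (fun b => b == false)) :=
    list_findIdx hq hpred
  have hx : Primrec (fun p : List Bool =>
      (p.drop (p.findIdx (fun b => b == false) + 1)).drop
        ((p.drop (p.findIdx (fun b => b == false) + 1)).findIdx (fun b => b == false) + 1)) :=
    primrec_drop.comp hq (succ.comp hm)
  have hcond : PrimrecPred (fun p : List Bool =>
      p.findIdx (fun b => b == false) +
        (p.drop (p.findIdx (fun b => b == false) + 1)).findIdx (fun b => b == false) + 2 +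
        ((p.drop (p.findIdx (fun b => b == false) + 1)).drop
          ((p.drop (p.findIdx (fun b => b == false) + 1)).findIdx (fun b => b == false) + 1)).length
        = p.length ∧
      3 ≤ (p.drop (p.findIdx (fun b => b == false) + 1)).findIdx (fun b => b == false) ∧
      (p.drop (p.findIdx (fun b => b == false) + 1)).findIdx (fun b => b == false) % 2 = 1) := by
    refine PrimrecPred.and ?_ (PrimrecPred.and ?_ ?_)
    · exact Primrec.eq.comp (nat_add.comp (nat_add.comp (nat_add.comp hj hm) (const 2))
        (list_length.comp hx)) list_length
    · exact nat_le.comp (const 3) hm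
    · exact Primrec.eq.comp (nat_mod.comp hm (const 2)) (const 1)
  have hres : Primrec (fun p : List Bool =>
      (some ((p.findIdx (fun b => b == false),
        ((p.drop (p.findIdx (fun b => b == false) + 1)).findIdx (fun b => b == false) - 3) / 2),
        (p.drop (p.findIdx (fun b => b == false) + 1)).drop
          ((p.drop (p.findIdx (fun b => b == false) + 1)).findIdx (fun b => b == false) + 1)) :
        Option ((ℕ × ℕ) × List Bool))) :=
    option_some.comp ((hj.pair (nat_div.comp (nat_sub.comp hm (const 3)) (const 2))).pair hx)
  exact (Primrec.ite hcond hres (const none)).of_eq fun p => by rw [parse]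

theorem partrec_WW : Partrec WW := by
  have h1 : Partrec (fun p : List Bool => (Part.ofOption (parse p))) :=
    Computable.ofOption primrec_parse.to_comp
  have hrf : Partrec (fun q : List Bool × ((ℕ × ℕ) × List Bool) => Nat.rfindOpt (F2 q.2)) :=
    Partrec.rfindOpt ((primrec_F2.to_comp.comp (Computable.snd.comp Computable.fst)
      Computable.snd).to₂)
  have hdec : Partrec₂ (fun (_ : List Bool × ((ℕ × ℕ) × List Bool)) (a : ℕ) =>
      Part.ofOption (Encodable.decode (α := List Bool) a)) :=
    (Computable.ofOption ((Computable.decode (α := List Bool)).comp Computable.snd)).to₂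
  have h2 : Partrec₂ (fun (p : List Bool) (t : (ℕ × ℕ) × List Bool) =>
      (Nat.rfindOpt (F2 t)).bind fun a => Part.ofOption (Encodable.decode (α := List Bool) a)) :=
    (hrf.bind hdec).to₂
  exact h1.bind h2
end CompProofs

open Nat.Partrec (Code)
open Nat.Partrec.Code
open scoped Classical

def good (j k : ℕ) (x : List Bool) : Prop := ∃ s, (F2 ((j, k), x) s).isSome

theorem F2_eq_some {j k : ℕ} {x : List Bool} {s : ℕ} {a : ℕ}
    (h : F2 ((j, k), x) s = some a) :
    x.length ≤ s ∧ AA j s ≤ 2 ^ (k + 2 * s) ∧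
      evaln s (Denumerable.ofNat Code j) (Encodable.encode x) = some a := by
  rw [F2] at h
  split_ifs at h with hc
  · exact ⟨hc.1, hc.2, h⟩

theorem mem_dom_WW {p : List Bool} (h : (WW p).Dom) :
    ∃ j k x, parse p = some ((j, k), x) ∧ good j k x ∧ p = canon j k x := by
  rw [WW] at h
  rcases hp : parse p with _ | ⟨⟨j, k⟩, x⟩
  · rw [hp] at h
    exact absurd h.of_bind (by simp [Part.ofOption])
  · refine ⟨j, k, x, rfl, ?_, parse_eq_some hp⟩
    rw [hp, show Part.ofOption (some ((j, k), x)) = Part.some ((j, k), x) from rfl,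
      Part.bind_some] at h
    obtain ⟨a, ha⟩ := Part.dom_iff_mem.mp h.of_bind
    obtain ⟨s, hs⟩ := Nat.rfindOpt_spec ha
    exact ⟨s, by rw [show F2 ((j, k), x) s = some a from hs]; rfl⟩


theorem list_sum_eq_toFinset_sum {α : Type*} [DecidableEq α] {L : List α} (hN : L.Nodup)
    (f : α → ℕ) : (L.map f).sum = ∑ x ∈ L.toFinset, f x := by
  rw [Finset.sum_list_map_count]
  refine (Finset.sum_congr rfl fun x hx => ?_).symm
  rw [List.count_eq_one_of_mem hN (List.mem_toFinset.mp hx)]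
  simp

theorem natVal_injective : Function.Injective natVal := fun a b hab => by
  rw [← bin_natVal a, hab, bin_natVal]

theorem zeta_eq_indicator (f : List Bool →. List Bool) :
    zeta f = ∑' m : ℕ, (Ups (dom f)).indicator (fun m => ((m : ℕ) : ℝ≥0∞)⁻¹) m := by
  rw [zeta]; exact tsum_subtype (Ups (dom f)) (fun m : ℕ => ((m : ℕ) : ℝ≥0∞)⁻¹)

theorem AA_le {V : List Bool →. List Bool} {cV : Nat.Partrec.Code}
    (hc : ∀ x : List Bool, Nat.Partrec.Code.eval cV (Encodable.encode x)
      = (V x).map Encodable.encode)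
    {k : ℕ} (hk : zeta V ≤ 2 ^ k) (s : ℕ) :
    AA (Encodable.encode cV) s ≤ 2 ^ (k + 2 * s) := by
  classical
  set j := Encodable.encode cV with hj
  have hofnat : Denumerable.ofNat Nat.Partrec.Code j = cV := Denumerable.ofNat_encode cV
  set term : List Bool → ℕ := fun x =>
    if (Nat.Partrec.Code.evaln s (Denumerable.ofNat Nat.Partrec.Code j)
        (Encodable.encode x)).isSome then 2 ^ (2 * s) / natVal x else 0 with hterm
  set T := ((strsLE s).toFinset).filter (fun x =>
    (Nat.Partrec.Code.evaln s (Denumerable.ofNat Nat.Partrec.Code j)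
      (Encodable.encode x)).isSome) with hT
  have hAA3 : AA j s = ∑ x ∈ T, 2 ^ (2 * s) / natVal x := by
    rw [show AA j s = ((strsLE s).map term).sum from rfl,
      list_sum_eq_toFinset_sum (strsLE_nodup s), hT, Finset.sum_filter]
  have hdomV : ∀ x ∈ T, x ∈ dom V := by
    intro x hx
    have := (Finset.mem_filter.mp hx).2
    obtain ⟨a, ha⟩ := Option.isSome_iff_exists.mp this
    have h2 : a ∈ Nat.Partrec.Code.eval cV (Encodable.encode x) := by
      rw [← hofnat]
      exact Nat.Partrec.Code.evaln_sound ha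
    rw [hc] at h2
    obtain ⟨y, hy, -⟩ := Part.mem_map_iff _ |>.mp h2
    exact Part.dom_iff_mem.mpr ⟨y, hy⟩
  have hinv : (∑ x ∈ T, ((natVal x : ℕ) : ℝ≥0∞)⁻¹) ≤ zeta V := by
    rw [zeta_eq_indicator]
    rw [← Finset.sum_image (f := fun m : ℕ => ((m : ℕ) : ℝ≥0∞)⁻¹)
      (g := natVal) (fun x _ y _ hxy => natVal_injective hxy)]
    have heq : ∀ m ∈ T.image natVal,
        ((m : ℕ) : ℝ≥0∞)⁻¹ = (Ups (dom V)).indicator (fun m => ((m : ℕ) : ℝ≥0∞)⁻¹) m := by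
      intro m hm
      obtain ⟨x, hxT, rfl⟩ := Finset.mem_image.mp hm
      rw [Set.indicator_of_mem]
      exact ⟨one_le_natVal x, by rw [bin_natVal]; exact hdomV x hxT⟩
    rw [Finset.sum_congr rfl heq]
    exact ENNReal.sum_le_tsum _
  have hcast : (AA j s : ℝ≥0∞) ≤ (2 : ℝ≥0∞) ^ (2 * s) * 2 ^ k := by
    rw [hAA3, Nat.cast_sum]
    calc (∑ x ∈ T, ((2 ^ (2 * s) / natVal x : ℕ) : ℝ≥0∞))
        ≤ ∑ x ∈ T, (2 : ℝ≥0∞) ^ (2 * s) * ((natVal x : ℕ) : ℝ≥0∞)⁻¹ := by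
          refine Finset.sum_le_sum fun x _ => ?_
          have hm0 : ((natVal x : ℕ) : ℝ≥0∞) ≠ 0 := by
            simp only [ne_eq, Nat.cast_eq_zero]
            have := one_le_natVal x; omega
          have hmt : ((natVal x : ℕ) : ℝ≥0∞) ≠ ⊤ := ENNReal.natCast_ne_top _
          rw [← div_eq_mul_inv, ENNReal.le_div_iff_mul_le (Or.inl hm0) (Or.inl hmt)]
          have h3 := Nat.div_mul_le_self (2 ^ (2 * s)) (natVal x)
          exact_mod_cast h3
        _ = (2 : ℝ≥0∞) ^ (2 * s) * ∑ x ∈ T, ((natVal x : ℕ) : ℝ≥0∞)⁻¹ := by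
          rw [Finset.mul_sum]
        _ ≤ (2 : ℝ≥0∞) ^ (2 * s) * 2 ^ k := mul_le_mul_right (le_trans hinv hk) _
  have hfin : (AA j s : ℝ≥0∞) ≤ ((2 ^ (k + 2 * s) : ℕ) : ℝ≥0∞) := by
    refine hcast.trans_eq ?_
    push_cast
    rw [pow_add]
    ring
  exact_mod_cast hfin
theorem key_bound (j k : ℕ) :
    (∑' m : ↥{m : ℕ | 1 ≤ m ∧ good j k (bin m)}, ((m : ℕ) : ℝ≥0∞)⁻¹) ≤ 2 ^ (k + 2) := by
  classical
  rw [tsum_subtype {m : ℕ | 1 ≤ m ∧ good j k (bin m)} (fun m : ℕ => ((m : ℕ) : ℝ≥0∞)⁻¹)]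
  rw [ENNReal.tsum_eq_iSup_sum]
  refine iSup_le fun T0 => ?_
  have hind : ∀ m ∈ T0, {m : ℕ | 1 ≤ m ∧ good j k (bin m)}.indicator
      (fun m => ((m : ℕ) : ℝ≥0∞)⁻¹) m
      = if 1 ≤ m ∧ good j k (bin m) then ((m : ℕ) : ℝ≥0∞)⁻¹ else 0 := by
    intro m _; rw [Set.indicator_apply]; rfl
  rw [Finset.sum_congr rfl hind, ← Finset.sum_filter]
  set S := T0.filter (fun m => 1 ≤ m ∧ good j k (bin m)) with hSdef
  rcases Finset.eq_empty_or_nonempty S with hS | hS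
  · rw [hS]; simp
  have hgood : ∀ m ∈ S, good j k (bin m) := fun m hm => ((Finset.mem_filter.mp hm).2).2
  have h1le : ∀ m ∈ S, 1 ≤ m := fun m hm => ((Finset.mem_filter.mp hm).2).1
  set sel : ℕ → ℕ := fun m => if h : good j k (bin m) then Nat.find h else 0 with hsel
  have hFm : ∀ m ∈ S, (F2 ((j, k), bin m) (sel m)).isSome := by
    intro m hm
    have hg := hgood m hm
    rw [hsel]; simp only [dif_pos hg]
    exact Nat.find_spec hg
  set s1 := S.sup sel with hs1
  obtain ⟨m0, hm0S, hm0⟩ := Finset.exists_mem_eq_sup S hS sel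
  -- facts from F2
  have hfacts : ∀ m ∈ S, (bin m).length ≤ sel m ∧ AA j (sel m) ≤ 2 ^ (k + 2 * sel m) ∧
      (Nat.Partrec.Code.evaln (sel m) (Denumerable.ofNat Nat.Partrec.Code j)
        (Encodable.encode (bin m))).isSome := by
    intro m hm
    obtain ⟨a, ha⟩ := Option.isSome_iff_exists.mp (hFm m hm)
    obtain ⟨h1, h2, h3⟩ := F2_eq_some ha
    exact ⟨h1, h2, by rw [h3]; rfl⟩
  have hAAs1 : AA j s1 ≤ 2 ^ (k + 2 * s1) := by
    rw [hs1, hm0]; exact (hfacts m0 hm0S).2.1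
  have hhalt : ∀ m ∈ S, (Nat.Partrec.Code.evaln s1 (Denumerable.ofNat Nat.Partrec.Code j)
      (Encodable.encode (bin m))).isSome := by
    intro m hm
    obtain ⟨a, ha⟩ := Option.isSome_iff_exists.mp (hfacts m hm).2.2
    have := Nat.Partrec.Code.evaln_mono (Finset.le_sup hm) ha
    rw [this]; rfl
  have hlen : ∀ m ∈ S, (bin m).length ≤ s1 :=
    fun m hm => le_trans (hfacts m hm).1 (Finset.le_sup hm)
  have hmlt : ∀ m ∈ S, m < 2 ^ (s1 + 1) := by
    intro m hm
    have h1 : m = natVal (bin m) := (natVal_bin (h1le m hm)).symm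
    calc m = natVal (bin m) := h1
      _ < 2 ^ ((bin m).length + 1) := natVal_lt _
      _ ≤ 2 ^ (s1 + 1) := Nat.pow_le_pow_right (by norm_num) (by have := hlen m hm; omega)
  -- nat-level bound on the sum of divisions
  have hbinj : ∀ a ∈ S, ∀ b ∈ S, bin a = bin b → a = b := by
    intro a ha b hb hab
    rw [← natVal_bin (h1le a ha), hab, natVal_bin (h1le b hb)]
  have hA : (∑ m ∈ S, 2 ^ (2 * s1) / m) ≤ AA j s1 := by
    have himage : ∑ m ∈ S, 2 ^ (2 * s1) / m
        = ∑ x ∈ S.image bin, (2 ^ (2 * s1) / natVal x) := by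
      rw [Finset.sum_image fun a ha b hb hab => hbinj a ha b hb hab]
      exact Finset.sum_congr rfl fun m hm => by rw [natVal_bin (h1le m hm)]
    rw [himage]
    set term : List Bool → ℕ := fun x =>
      if (Nat.Partrec.Code.evaln s1 (Denumerable.ofNat Nat.Partrec.Code j)
          (Encodable.encode x)).isSome then 2 ^ (2 * s1) / natVal x else 0 with hterm
    have hAAexp : AA j s1 = ∑ x ∈ (strsLE s1).toFinset, term x := by
      rw [show AA j s1 = ((strsLE s1).map term).sum from rfl,
        list_sum_eq_toFinset_sum (strsLE_nodup s1)]
    have hsub : S.image bin ⊆ (strsLE s1).toFinset := by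
      intro x hx
      obtain ⟨m, hm, rfl⟩ := Finset.mem_image.mp hx
      exact List.mem_toFinset.mpr ((mem_strsLE _ _).mpr (hlen m hm))
    have hterm_eq : ∀ x ∈ S.image bin, 2 ^ (2 * s1) / natVal x = term x := by
      intro x hx
      obtain ⟨m, hm, rfl⟩ := Finset.mem_image.mp hx
      rw [hterm]; simp only [if_pos (hhalt m hm)]
    rw [Finset.sum_congr rfl hterm_eq, hAAexp]
    exact Finset.sum_le_sum_of_subset hsub
  have hcard : S.card ≤ 2 ^ (s1 + 1) := by
    have : S ⊆ Finset.range (2 ^ (s1 + 1)) :=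
      fun m hm => Finset.mem_range.mpr (hmlt m hm)
    simpa using Finset.card_le_card this
  have hnat : (∑ m ∈ S, (2 ^ (2 * s1) / m + 1)) ≤ 2 ^ (k + 2) * 2 ^ (2 * s1) := by
    have h1 : (∑ m ∈ S, (2 ^ (2 * s1) / m + 1)) = (∑ m ∈ S, 2 ^ (2 * s1) / m) + S.card := by
      rw [Finset.sum_add_distrib]; simp
    have e1 : (2 : ℕ) ^ (k + 2 * s1) = 2 ^ k * 2 ^ (2 * s1) := pow_add 2 k (2 * s1)
    have e2 : (2 : ℕ) ^ (k + 2) = 4 * 2 ^ k := by rw [pow_add]; ring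
    have e3 : (2 : ℕ) ^ (s1 + 1) ≤ 2 * 2 ^ (2 * s1) := by
      rw [pow_succ, mul_comm]
      exact Nat.mul_le_mul_left 2 (Nat.pow_le_pow_right (by norm_num) (by omega))
    have h4 : (1 : ℕ) ≤ 2 ^ k := Nat.one_le_two_pow
    have h5 : (1 : ℕ) ≤ 2 ^ (2 * s1) := Nat.one_le_two_pow
    calc (∑ m ∈ S, (2 ^ (2 * s1) / m + 1)) = (∑ m ∈ S, 2 ^ (2 * s1) / m) + S.card := h1
      _ ≤ 2 ^ (k + 2 * s1) + 2 ^ (s1 + 1) := Nat.add_le_add (le_trans hA hAAs1) hcard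
      _ ≤ 2 ^ k * 2 ^ (2 * s1) + 2 * 2 ^ (2 * s1) := by rw [← e1]; exact Nat.add_le_add_left e3 _
      _ ≤ 2 ^ (k + 2) * 2 ^ (2 * s1) := by rw [e2]; nlinarith
  -- pass to ℝ≥0∞
  set E : ℝ≥0∞ := ((2 ^ (2 * s1) : ℕ) : ℝ≥0∞) with hE
  have hE0 : E ≠ 0 := by rw [hE]; exact Nat.cast_ne_zero.mpr (by positivity)
  have hEt : E ≠ ⊤ := ENNReal.natCast_ne_top _
  have hpoint : ∀ m ∈ S, ((m : ℕ) : ℝ≥0∞)⁻¹ ≤ (((2 ^ (2 * s1) / m + 1 : ℕ)) : ℝ≥0∞) * E⁻¹ := by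
    intro m hm
    have hm1 := h1le m hm
    have hm0' : ((m : ℕ) : ℝ≥0∞) ≠ 0 := by exact_mod_cast Nat.cast_ne_zero.mpr (by omega)
    have hmt : ((m : ℕ) : ℝ≥0∞) ≠ ⊤ := ENNReal.natCast_ne_top _
    rw [← div_eq_mul_inv, ENNReal.le_div_iff_mul_le (Or.inl hE0) (Or.inl hEt)]
    have hlt : 2 ^ (2 * s1) < m * (2 ^ (2 * s1) / m + 1) := Nat.lt_mul_div_succ _ (by omega)
    have hle : E ≤ ((m : ℕ) : ℝ≥0∞) * ((2 ^ (2 * s1) / m + 1 : ℕ) : ℝ≥0∞) := by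
      rw [hE]; exact_mod_cast hlt.le
    calc ((m : ℕ) : ℝ≥0∞)⁻¹ * E ≤ ((m : ℕ) : ℝ≥0∞)⁻¹ * (((m : ℕ) : ℝ≥0∞) *
          ((2 ^ (2 * s1) / m + 1 : ℕ) : ℝ≥0∞)) := mul_le_mul_right hle _
      _ = ((2 ^ (2 * s1) / m + 1 : ℕ) : ℝ≥0∞) := by
          rw [← mul_assoc, ENNReal.inv_mul_cancel hm0' hmt, one_mul]
  calc (∑ m ∈ S, ((m : ℕ) : ℝ≥0∞)⁻¹)
      ≤ ∑ m ∈ S, (((2 ^ (2 * s1) / m + 1 : ℕ)) : ℝ≥0∞) * E⁻¹ := Finset.sum_le_sum hpoint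
    _ = ((∑ m ∈ S, (2 ^ (2 * s1) / m + 1) : ℕ) : ℝ≥0∞) * E⁻¹ := by
        rw [← Finset.sum_mul, Nat.cast_sum]
    _ ≤ ((2 ^ (k + 2) * 2 ^ (2 * s1) : ℕ) : ℝ≥0∞) * E⁻¹ := by
        exact mul_le_mul_left (by exact_mod_cast hnat) _
    _ = ((2 ^ (k + 2) : ℕ) : ℝ≥0∞) * (E * E⁻¹) := by rw [hE]; push_cast; ring
    _ = ((2 ^ (k + 2) : ℕ) : ℝ≥0∞) := by rw [ENNReal.mul_inv_cancel hE0 hEt, mul_one]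
    _ = 2 ^ (k + 2) := by push_cast; rfl
theorem zeta_WW_le : zeta WW ≤ 1 := by
  classical
  set H : ℕ × ℕ × ℕ → ℝ≥0∞ := fun t =>
    (2 : ℝ≥0∞)⁻¹ ^ (t.1 + 2 * t.2.1 + 4) *
      ({m : ℕ | 1 ≤ m ∧ good t.1 t.2.1 (bin m)}.indicator
        (fun m => ((m : ℕ) : ℝ≥0∞)⁻¹) t.2.2) with hH
  set i : ↥(Ups (dom WW)) → ℕ × ℕ × ℕ := fun n =>
    ((parse (bin (n : ℕ))).map (fun t => (t.1.1, t.1.2, natVal t.2))).getD (0, 0, 0) with hi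
  have hstruct : ∀ n : ↥(Ups (dom WW)), ∃ j k x, parse (bin (n : ℕ)) = some ((j, k), x) ∧
      good j k x ∧ bin (n : ℕ) = canon j k x ∧ (n : ℕ) = natVal (canon j k x) ∧
      i n = (j, k, natVal x) := by
    intro n
    obtain ⟨h1n, hdomn⟩ := n.2
    obtain ⟨j, k, x, hp, hg, hcanon⟩ := mem_dom_WW hdomn
    refine ⟨j, k, x, hp, hg, hcanon, ?_, ?_⟩
    · rw [← hcanon, natVal_bin h1n]
    · rw [hi]; simp only [hp, Option.map_some, Option.getD_some]
  -- pointwise bound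
  have hpoint : ∀ n : ↥(Ups (dom WW)), (((n : ℕ) : ℕ) : ℝ≥0∞)⁻¹ ≤ H (i n) := by
    intro n
    obtain ⟨j, k, x, hp, hg, hcanon, hn, hin⟩ := hstruct n
    obtain ⟨h1n, hdomn⟩ := n.2
    rw [hin, hH]
    simp only
    rw [Set.indicator_of_mem (by
      refine ⟨one_le_natVal x, ?_⟩
      rw [bin_natVal]; exact hg)]
    -- nat inequality
    have hnat : 2 ^ (j + 2 * k + 4) * natVal x ≤ (n : ℕ) := by
      have h1 : natVal x ≤ 2 ^ (x.length + 1) := (natVal_lt x).le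
      have h2 : 2 ^ ((canon j k x).length) ≤ natVal (canon j k x) := le_natVal _
      rw [canon_length] at h2
      calc 2 ^ (j + 2 * k + 4) * natVal x ≤ 2 ^ (j + 2 * k + 4) * 2 ^ (x.length + 1) :=
            Nat.mul_le_mul_left _ h1
        _ = 2 ^ (x.length + (j + 2 * k + 5)) := by rw [← pow_add]; ring_nf
        _ ≤ natVal (canon j k x) := h2
        _ = (n : ℕ) := hn.symm
    have hinv : (((n : ℕ) : ℕ) : ℝ≥0∞)⁻¹ ≤ (((2 ^ (j + 2 * k + 4) * natVal x : ℕ)) : ℝ≥0∞)⁻¹ :=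
      ENNReal.inv_le_inv' (by exact_mod_cast hnat)
    refine hinv.trans ?_
    rw [Nat.cast_mul, ENNReal.mul_inv (Or.inl (by exact_mod_cast pow_ne_zero _ (by norm_num : (2:ℕ) ≠ 0))) (Or.inl (ENNReal.natCast_ne_top _))]
    rw [Nat.cast_pow]
    rw [show ((2 : ℕ) : ℝ≥0∞) = 2 from rfl, ← ENNReal.inv_pow]
  -- injectivity
  have hinj : Function.Injective i := by
    intro n1 n2 h12
    obtain ⟨j1, k1, x1, hp1, hg1, hc1, hn1, hi1⟩ := hstruct n1
    obtain ⟨j2, k2, x2, hp2, hg2, hc2, hn2, hi2⟩ := hstruct n2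
    rw [hi1, hi2] at h12
    obtain ⟨hj, hk, hm⟩ : j1 = j2 ∧ k1 = k2 ∧ natVal x1 = natVal x2 := by
      refine ⟨congrArg Prod.fst h12, ?_, ?_⟩
      · exact congrArg (Prod.fst ∘ Prod.snd) h12
      · exact congrArg (Prod.snd ∘ Prod.snd) h12
    have hx : x1 = x2 := natVal_injective hm
    apply Subtype.ext
    rw [hn1, hn2, hj, hk, hx]
  -- put it together
  calc zeta WW ≤ ∑' n : ↥(Ups (dom WW)), H (i n) := ENNReal.tsum_le_tsum hpoint
    _ ≤ ∑' t : ℕ × ℕ × ℕ, H t := ENNReal.tsum_comp_le_tsum_of_injective hinj H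
    _ ≤ 1 := by
        rw [ENNReal.tsum_prod']
        have hinner : ∀ j : ℕ, (∑' q : ℕ × ℕ, H (j, q)) ≤ 2⁻¹ ^ (j + 2) * 2 := by
          intro j
          rw [ENNReal.tsum_prod']
          have hk : ∀ k : ℕ, (∑' m : ℕ, H (j, k, m)) ≤ 2⁻¹ ^ (j + k + 2) := by
            intro k
            rw [hH]
            simp only
            rw [ENNReal.tsum_mul_left]
            have hkey : (∑' m : ℕ, {m : ℕ | 1 ≤ m ∧ good j k (bin m)}.indicator
                (fun m => ((m : ℕ) : ℝ≥0∞)⁻¹) m) ≤ 2 ^ (k + 2) := by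
              rw [← tsum_subtype {m : ℕ | 1 ≤ m ∧ good j k (bin m)}
                (fun m : ℕ => ((m : ℕ) : ℝ≥0∞)⁻¹)]
              exact key_bound j k
            calc (2 : ℝ≥0∞)⁻¹ ^ (j + 2 * k + 4) * _ ≤ 2⁻¹ ^ (j + 2 * k + 4) * 2 ^ (k + 2) :=
                  mul_le_mul_right hkey _
              _ = 2⁻¹ ^ (j + k + 2) := by
                  have hsplit : (2 : ℝ≥0∞)⁻¹ ^ (j + 2 * k + 4)
                      = 2⁻¹ ^ (j + k + 2) * 2⁻¹ ^ (k + 2) := by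
                    rw [← pow_add]; congr 1; ring
                  rw [hsplit, mul_assoc, ← ENNReal.inv_pow, ← ENNReal.inv_pow,
                    ENNReal.inv_mul_cancel (pow_ne_zero _ (by norm_num))
                      (ENNReal.pow_ne_top ENNReal.ofNat_ne_top), mul_one]
          calc (∑' k : ℕ, ∑' m : ℕ, H (j, k, m)) ≤ ∑' k : ℕ, 2⁻¹ ^ (j + k + 2) :=
                ENNReal.tsum_le_tsum hk
            _ = 2⁻¹ ^ (j + 2) * ∑' k : ℕ, 2⁻¹ ^ k := by
                rw [← ENNReal.tsum_mul_left]
                refine tsum_congr fun k => ?_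
                rw [← pow_add]; congr 1; ring
            _ = 2⁻¹ ^ (j + 2) * 2 := by
                rw [ENNReal.tsum_geometric, ENNReal.one_sub_inv_two, inv_inv]
        calc (∑' j : ℕ, ∑' q : ℕ × ℕ, H (j, q)) ≤ ∑' j : ℕ, 2⁻¹ ^ (j + 2) * 2 :=
              ENNReal.tsum_le_tsum hinner
          _ = (∑' j : ℕ, 2⁻¹ ^ j) * (2⁻¹ ^ 2 * 2) := by
              rw [← ENNReal.tsum_mul_right]
              refine tsum_congr fun j => ?_
              rw [pow_add]; ring
          _ = 2⁻¹ ^ 2 * 4 := by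
              rw [ENNReal.tsum_geometric, ENNReal.one_sub_inv_two, inv_inv]
              rw [show (4 : ℝ≥0∞) = 2 * 2 by norm_num]; ring
          _ = 1 := by
              have h2 : (2 : ℝ≥0∞)⁻¹ * 2 = 1 :=
                ENNReal.inv_mul_cancel (by norm_num) ENNReal.ofNat_ne_top
              calc (2 : ℝ≥0∞)⁻¹ ^ 2 * 4 = (2⁻¹ * 2) * (2⁻¹ * 2) := by
                    rw [show (4 : ℝ≥0∞) = 2 * 2 by norm_num]; ring
                _ = 1 := by rw [h2, one_mul]
/-- There exists a tuatara machine universal for the class of all convergent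
machines. -/
theorem stmt_10 :
    ∃ W : List Bool →. List Bool, Partrec W ∧ zeta W ≤ 1 ∧
      ∀ V : List Bool →. List Bool, Partrec V → zeta V < ⊤ →
        ∃ c : ℕ, ∀ x ∈ dom V, ∃ p : List Bool, p.length ≤ x.length + c ∧ W p = V x := by
  refine ⟨WW, CompProofs.partrec_WW, zeta_WW_le, fun V hV hVfin => ?_⟩
  obtain ⟨cV, hcV⟩ := Nat.Partrec.Code.exists_code.mp hV
  have hc : ∀ x : List Bool, eval cV (Encodable.encode x) = (V x).map Encodable.encode := by
    intro x
    rw [hcV]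
    simp [Encodable.encodek]
  obtain ⟨kn, hkn⟩ := ENNReal.exists_nat_gt hVfin.ne
  have hk : zeta V ≤ 2 ^ kn :=
    le_trans hkn.le (by exact_mod_cast Nat.cast_le.mpr (Nat.lt_two_pow_self (n := kn)).le)
  set j := Encodable.encode cV with hj
  have hAA : ∀ s, AA j s ≤ 2 ^ (kn + 2 * s) := fun s => AA_le hc hk s
  refine ⟨j + 2 * kn + 5, fun x hx => ?_⟩
  refine ⟨canon j kn x, by rw [canon_length], ?_⟩
  -- now compute WW (canon j kn x) = V x
  have hpc : parse (canon j kn x) = some ((j, kn), x) := parse_canon j kn x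
  have hofnat : Denumerable.ofNat Code j = cV := Denumerable.ofNat_encode cV
  rw [WW, hpc]
  have hstep1 : Nat.rfindOpt (F2 ((j, kn), x)) = (V x).map Encodable.encode := by
    have hdomV : ((V x).map Encodable.encode).Dom := by exact hx
    obtain ⟨a, ha⟩ := Part.dom_iff_mem.mp hdomV
    have haev : a ∈ eval cV (Encodable.encode x) := by rw [hc]; exact ha
    obtain ⟨s0, hs0⟩ := evaln_complete.mp haev
    set s := max s0 x.length with hs
    have hsev : a ∈ evaln s cV (Encodable.encode x) :=
      evaln_mono (le_max_left _ _) hs0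
    have hF2 : F2 ((j, kn), x) s = some a := by
      rw [F2]
      rw [if_pos ⟨le_max_right _ _, hAA s⟩, hofnat]
      exact hsev
    have hmemF : a ∈ F2 ((j, kn), x) s := hF2
    have hdomR : (Nat.rfindOpt (F2 ((j, kn), x))).Dom :=
      Nat.rfindOpt_dom.mpr ⟨s, a, hmemF⟩
    have hsound : ∀ b, b ∈ Nat.rfindOpt (F2 ((j, kn), x)) → b ∈ (V x).map Encodable.encode := by
      intro b hb
      obtain ⟨s', hbs'⟩ := Nat.rfindOpt_spec hb
      have := F2_eq_some hbs'
      rw [hofnat] at this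
      have : b ∈ eval cV (Encodable.encode x) := evaln_sound this.2.2
      rwa [hc] at this
    apply Part.ext
    intro b
    constructor
    · exact hsound b
    · intro hb
      have hval := hsound _ (Part.get_mem hdomR)
      have : b = (Nat.rfindOpt (F2 ((j, kn), x))).get hdomR := Part.mem_unique hb hval
      rw [this]; exact Part.get_mem hdomR
  rw [show (Part.ofOption (some ((j, kn), x))) = Part.some ((j, kn), x) from rfl,
    Part.bind_some]  -- hope it reduces
  rw [hstep1]
  apply Part.ext
  intro b
  simp [Part.mem_bind_iff, Part.mem_map_iff, Encodable.encodek, Part.mem_ofOption]
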